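/- Let p and q be coprime integers with q > 0, let w be a positive integer, and let d = gcd(q, w²). Suppose A and B are elements of SL(2, ℂ) with A·B = B·A, A ≠ I, A ≠ −I, and A^p·B^q = I. Then there exists M ∈ SL(2, ℂ) such that M·B = B·M, either M^w = A or M^w = −A, and M^{p·w²/d}·B^{w·q/d} = I. -/

import Mathlib

open Matrix

lemma ch2 (C : Matrix (Fin 2) (Fin 2) ℂ) : C*C = C.trace • C - C.det • 1 := by
  ext i j
  fin_cases i <;> fin_cases j <;>
    simp [Matrix.mul_apply, Fin.sum_univ_two, Matrix.trace_fin_two, Matrix.det_fin_two,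
      Matrix.one_apply] <;> ring

lemma detPencil (C : Matrix (Fin 2) (Fin 2) ℂ) (α β : ℂ) :
    (α•C + β•1).det = α^2*C.det + α*β*C.trace + β^2 := by
  simp [Matrix.det_fin_two, Matrix.trace_fin_two, Matrix.one_apply]
  ring

lemma epow (E₁ E₂ : Matrix (Fin 2) (Fin 2) ℂ) (h12 : E₁*E₂ = 0) (h21 : E₂*E₁ = 0)
    (hsum : E₁ + E₂ = 1) (a b : ℂ) (n : ℕ) :
    (a•E₁ + b•E₂)^n = a^n•E₁ + b^n•E₂ := by
  have hE1 : E₁*E₁ = E₁ := by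
    have := congrArg (E₁ * ·) hsum
    simpa [mul_add, h12] using this
  have hE2 : E₂*E₂ = E₂ := by
    have := congrArg (E₂ * ·) hsum
    simpa [mul_add, h21] using this
  induction n with
  | zero => simpa using hsum.symm
  | succ n ih =>
    rw [pow_succ, ih, add_mul, mul_add, mul_add, smul_mul_smul_comm, smul_mul_smul_comm,
      smul_mul_smul_comm, smul_mul_smul_comm, hE1, hE2, h12, h21, smul_zero, smul_zero,
      pow_succ, pow_succ]
    module


lemma upow (N : Matrix (Fin 2) (Fin 2) ℂ) (hN : N*N = 0) (s : ℂ) (n : ℕ) :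
    (1 + s•N)^n = 1 + ((n:ℂ)*s)•N := by
  induction n with
  | zero => simp
  | succ n ih =>
    rw [pow_succ, ih]
    simp only [mul_add, add_mul, one_mul, mul_one, smul_mul_smul_comm, hN, smul_zero, add_zero]
    push_cast
    module

lemma rootLemma (C : Matrix (Fin 2) (Fin 2) ℂ) (hC : C.det = 1) (n : ℕ) (hn : 0 < n) :
    ∃ D : Matrix (Fin 2) (Fin 2) ℂ, D.det = 1 ∧ (∃ α β : ℂ, D = α•C + β•1) ∧
      (D^n = C ∨ (Even n ∧ D^n = -C)) := by
  have hCH : C*C = C.trace • C - 1 := by rw [ch2 C, hC, one_smul]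
  set t := C.trace with htdef
  by_cases ht : t^2 = 4
  · -- parabolic case
    set ε : ℂ := t/2 with hεdef
    have hε2 : ε*ε = 1 := by rw [hεdef]; field_simp; linear_combination ht
    have hεt : ε*2 = t := by rw [hεdef]; ring
    set N : Matrix (Fin 2) (Fin 2) ℂ := ε•C - 1 with hNdef
    have hN : N*N = 0 := by
      rw [hNdef]
      simp only [sub_mul, mul_sub, smul_mul_smul_comm, one_mul, mul_one, hCH, smul_sub,
        smul_smul, hε2]
      module
    have hCN : C = ε•N + ε•1 := by
      rw [hNdef, smul_sub, smul_smul, hε2]; module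
    have hn0 : (n:ℂ) ≠ 0 := Nat.cast_ne_zero.mpr hn.ne'
    set s : ℂ := 1/n with hsdef
    have hns : (n:ℂ)*s = 1 := by rw [hsdef]; field_simp
    have hGpen : ∀ δ : ℂ, δ•(1 + s•N) = (δ*s*ε)•C + (δ - δ*s)•1 := by
      intro δ; rw [hNdef]; module
    have hdetG : ∀ δ : ℂ, δ*δ = 1 → (δ•(1 + s•N)).det = 1 := by
      intro δ hδ
      rw [hGpen δ, detPencil, hC, ← htdef]
      linear_combination (-(δ*δ*s*(1-s)*ε))*hεt + (δ*δ*s*s + 2*δ*δ*s*(1-s))*hε2 + hδ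
    have hGpow : ∀ δ : ℂ, (δ•(1 + s•N))^n = δ^n • (1 + N) := by
      intro δ
      rw [smul_pow, upow N hN s n, hns, one_smul]
    by_cases hε1 : ε = 1
    · refine ⟨1•(1 + s•N), hdetG 1 (by ring), ⟨1*s*ε, 1-1*s, hGpen 1⟩, Or.inl ?_⟩
      rw [hGpow 1, one_pow, one_smul, hCN, hε1]
      module
    · have hεm : ε = -1 := by
        have h0 : (ε - 1)*(ε + 1) = 0 := by linear_combination hε2
        rcases mul_eq_zero.mp h0 with h | h
        · exact absurd (sub_eq_zero.mp h) hε1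
        · exact eq_neg_of_add_eq_zero_left h
      rcases Nat.even_or_odd n with hev | hod
      · refine ⟨1•(1 + s•N), hdetG 1 (by ring), ⟨1*s*ε, 1-1*s, hGpen 1⟩, Or.inr ⟨hev, ?_⟩⟩
        rw [hGpow 1, one_pow, one_smul, hCN, hεm]
        module
      · refine ⟨(-1)•(1 + s•N), hdetG (-1) (by ring), ⟨(-1)*s*ε, -1-(-1)*s, hGpen (-1)⟩,
          Or.inl ?_⟩
        rw [hGpow (-1), hod.neg_one_pow, hCN, hεm]
        module
  · obtain ⟨g, hg⟩ : ∃ g : ℂ, g^2 = t^2 - 4 := IsAlgClosed.exists_pow_nat_eq _ zero_lt_two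
    have hg0 : g ≠ 0 := by
      intro h
      rw [h] at hg
      apply ht
      have h4 : t^2 - 4 = 0 := by rw [← hg]; ring
      linear_combination h4
    obtain ⟨lam, lam', hll, hsum, hdif⟩ :
        ∃ lam lam' : ℂ, lam*lam' = 1 ∧ lam + lam' = t ∧ lam - lam' = g :=
      ⟨(t+g)/2, (t-g)/2, by field_simp; linear_combination -hg, by ring, by ring⟩
    have hlam0 : lam ≠ 0 := fun h => by simp [h] at hll
    obtain ⟨μ, hμ⟩ : ∃ μ : ℂ, μ^n = lam := IsAlgClosed.exists_pow_nat_eq _ hn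
    have hμ0 : μ ≠ 0 := fun h => hlam0 (by rw [← hμ, h, zero_pow hn.ne'])
    obtain ⟨μ', hμμ', hμ'n⟩ : ∃ μ' : ℂ, μ*μ' = 1 ∧ μ'^n = lam' :=
      ⟨μ⁻¹, mul_inv_cancel₀ hμ0, by
        rw [inv_pow, hμ]; exact inv_eq_of_mul_eq_one_right hll⟩
    set E₁ := g⁻¹ • (C - lam'•1) with hE1def
    set E₂ := g⁻¹ • (lam•1 - C) with hE2def
    have hsumE : E₁ + E₂ = 1 := by
      rw [hE1def, hE2def, ← smul_add]
      have h1 : C - lam'•1 + (lam•1 - C) = g•(1:Matrix (Fin 2) (Fin 2) ℂ) := by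
        rw [← hdif]; module
      rw [h1, smul_smul, inv_mul_cancel₀ hg0, one_smul]
    have hinner : (C - lam'•1) * (lam•1 - C) = 0 := by
      have expand : (C - lam'•1) * (lam•1 - C)
          = (lam+lam')•C - C*C - (lam*lam')•(1:Matrix (Fin 2) (Fin 2) ℂ) := by
        simp only [sub_mul, mul_sub, smul_mul_assoc, mul_smul_comm, one_mul, mul_one, smul_smul]
        module
      rw [expand, hCH, hsum, hll]
      module
    have hinner' : (lam•1 - C) * (C - lam'•1) = 0 := by
      have expand : (lam•1 - C) * (C - lam'•1)
          = (lam+lam')•C - C*C - (lam*lam')•(1:Matrix (Fin 2) (Fin 2) ℂ) := by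
        simp only [sub_mul, mul_sub, smul_mul_assoc, mul_smul_comm, one_mul, mul_one, smul_smul]
        module
      rw [expand, hCH, hsum, hll]
      module
    have h12 : E₁ * E₂ = 0 := by
      rw [hE1def, hE2def, smul_mul_assoc, mul_smul_comm, hinner, smul_zero, smul_zero]
    have h21 : E₂ * E₁ = 0 := by
      rw [hE1def, hE2def, smul_mul_assoc, mul_smul_comm, hinner', smul_zero, smul_zero]
    have hCE : C = lam•E₁ + lam'•E₂ := by
      rw [hE1def, hE2def]
      have h1 : lam • (g⁻¹ • (C - lam'•1)) + lam' • (g⁻¹ • (lam•1 - C))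
          = g⁻¹ • ((lam - lam')•C + (lam'*lam - lam*lam')•(1:Matrix (Fin 2) (Fin 2) ℂ)) := by
        module
      rw [h1, hdif]
      have h2 : lam'*lam - lam*lam' = 0 := by ring
      rw [h2, zero_smul, add_zero, smul_smul, inv_mul_cancel₀ hg0, one_smul]
    refine ⟨μ•E₁ + μ'•E₂, ?_, ⟨g⁻¹*(μ-μ'), g⁻¹*(μ'*lam - μ*lam'), ?_⟩, Or.inl ?_⟩
    · have hpen : μ•E₁ + μ'•E₂ = (g⁻¹*(μ-μ'))•C + (g⁻¹*(μ'*lam - μ*lam'))•1 := by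
        rw [hE1def, hE2def]; module
      rw [hpen, detPencil, hC, ← htdef]
      have e1 : g⁻¹*(μ-μ')*lam + g⁻¹*(μ'*lam - μ*lam') = μ := by
        field_simp
        linear_combination μ * hdif
      have e2 : g⁻¹*(μ-μ')*lam' + g⁻¹*(μ'*lam - μ*lam') = μ' := by
        field_simp
        linear_combination μ' * hdif
      calc (g⁻¹*(μ-μ'))^2*1 + (g⁻¹*(μ-μ'))*(g⁻¹*(μ'*lam - μ*lam'))*t + (g⁻¹*(μ'*lam - μ*lam'))^2
          = (g⁻¹*(μ-μ')*lam + g⁻¹*(μ'*lam - μ*lam'))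
            * (g⁻¹*(μ-μ')*lam' + g⁻¹*(μ'*lam - μ*lam')) := by
            linear_combination (-((g⁻¹*(μ-μ'))*(g⁻¹*(μ'*lam - μ*lam'))))*hsum + (-((g⁻¹*(μ-μ'))^2))*hll
        _ = μ * μ' := by rw [e1, e2]
        _ = 1 := hμμ'
    · rw [hE1def, hE2def]; module
    · rw [epow E₁ E₂ h12 h21 hsumE, hμ, hμ'n, hCE]

lemma slVal_mul (X Y : Matrix.SpecialLinearGroup (Fin 2) ℂ) : (X*Y).val = X.val*Y.val := rfl
lemma slVal_pow (X : Matrix.SpecialLinearGroup (Fin 2) ℂ) (n : ℕ) : (X^n).val = X.val^n := rfl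

/-- Matrix-theoretic core of Lemma 5.3: if `A, B ∈ SL(2,ℂ)` commute, `A ≠ ±I`, and
`A^p·B^q = I` with `p, q` coprime, `q > 0`, `w > 0`, `d = gcd(q, w²)`, then there is
`M ∈ SL(2,ℂ)` commuting with `B` such that `M^w = A` or `M^w = −A`, and
`M^{p·w²/d}·B^{w·q/d} = I`. -/
theorem stmt_16 (p q : ℤ) (hq : 0 < q) (hcop : IsCoprime p q)
    (w : ℤ) (hw : 0 < w) (d : ℤ) (hd : d = Int.gcd q (w ^ 2))
    (A B : Matrix.SpecialLinearGroup (Fin 2) ℂ)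
    (hAB : A * B = B * A) (hA1 : A ≠ 1)
    (hA2 : (A : Matrix (Fin 2) (Fin 2) ℂ) ≠ -1)
    (hpq : A ^ p * B ^ q = 1) :
    ∃ M : Matrix.SpecialLinearGroup (Fin 2) ℂ,
      M * B = B * M ∧
      (M ^ w = A ∨
        ((M ^ w : Matrix.SpecialLinearGroup (Fin 2) ℂ) : Matrix (Fin 2) (Fin 2) ℂ)
          = -(A : Matrix (Fin 2) (Fin 2) ℂ)) ∧
      M ^ (p * w ^ 2 / d) * B ^ (w * q / d) = 1 := by
  obtain ⟨a, b, hab⟩ := hcop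
  have hc : Commute A B := hAB
  set e := p * w^2 / d with hedef
  set f := w * q / d with hfdef
  set C : Matrix.SpecialLinearGroup (Fin 2) ℂ := A^b * B^(-a) with hCdef
  have hBq : B^q = A^(-p) := by
    rw [_root_.zpow_neg]
    exact (inv_eq_of_mul_eq_one_right hpq).symm
  have hCq : C^q = A := by
    rw [hCdef, (hc.zpow_zpow b (-a)).mul_zpow q, ← _root_.zpow_mul A, ← _root_.zpow_mul B,
      mul_comm (-a) q, _root_.zpow_mul B, hBq, ← _root_.zpow_mul A, ← _root_.zpow_add A]
    rw [show b*q + -p*(-a) = 1 by linear_combination hab, zpow_one]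
  have hCp : C^p = B⁻¹ := by
    rw [hCdef, (hc.zpow_zpow b (-a)).mul_zpow p, ← _root_.zpow_mul A, ← _root_.zpow_mul B]
    rw [show (-a)*p = q*b + -1 by linear_combination -hab, _root_.zpow_add B, _root_.zpow_mul B, hBq,
      ← _root_.zpow_mul A, ← mul_assoc, ← _root_.zpow_add A]
    rw [show b*p + -p*b = 0 by ring, zpow_zero, one_mul, _root_.zpow_neg, zpow_one]
  have hB : B = C^(-p) := by rw [_root_.zpow_neg, hCp, inv_inv]
  have hCB : Commute C B :=
    Commute.mul_left (hc.zpow_left b) ((Commute.refl B).zpow_left (-a))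
  have hCBm : (C : Matrix (Fin 2) (Fin 2) ℂ) * (B : Matrix (Fin 2) (Fin 2) ℂ)
      = (B : Matrix (Fin 2) (Fin 2) ℂ) * (C : Matrix (Fin 2) (Fin 2) ℂ) := by
    have h := congrArg (fun X : Matrix.SpecialLinearGroup (Fin 2) ℂ =>
      (X : Matrix (Fin 2) (Fin 2) ℂ)) hCB.eq
    simpa using h
  obtain ⟨Dm, hDdet, ⟨α, β, hDpen⟩, hDpow⟩ :=
    rootLemma (C : Matrix (Fin 2) (Fin 2) ℂ) C.prop w.toNat (by omega)
  set D : Matrix.SpecialLinearGroup (Fin 2) ℂ := ⟨Dm, hDdet⟩ with hDdef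
  have hDB : Commute D B := by
    have : Dm * (B : Matrix (Fin 2) (Fin 2) ℂ) = (B : Matrix (Fin 2) (Fin 2) ℂ) * Dm := by
      rw [hDpen]
      simp only [add_mul, mul_add, smul_mul_assoc, mul_smul_comm, one_mul, mul_one, hCBm]
    exact Subtype.ext (by simpa using this)
  have hwcast : ((w.toNat : ℤ)) = w := Int.toNat_of_nonneg hw.le
  have hDwcoe : ((D^w : Matrix.SpecialLinearGroup (Fin 2) ℂ) : Matrix (Fin 2) (Fin 2) ℂ)
      = Dm ^ w.toNat := by
    have hw' : D ^ w = D ^ (w.toNat) := by rw [← _root_.zpow_natCast, hwcast]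
    rw [hw']
    simp only [slVal_pow]
    simp [hDdef]
  have hd0 : (0:ℤ) < d := by
    rw [hd]
    exact_mod_cast Int.gcd_pos_iff.mpr (Or.inl hq.ne')
  obtain ⟨q', hq'⟩ : d ∣ q := hd ▸ Int.gcd_dvd_left q (w^2)
  obtain ⟨w2, hw2⟩ : d ∣ w^2 := hd ▸ Int.gcd_dvd_right q (w^2)
  have he : e = p * w2 := by
    rw [hedef, hw2, show p*(d*w2) = d*(p*w2) by ring, Int.mul_ediv_cancel_left _ hd0.ne']
  have hf : f = w * q' := by
    rw [hfdef, hq', show w*(d*q') = d*(w*q') by ring, Int.mul_ediv_cancel_left _ hd0.ne']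
  have hkey : q*e + w*(-p*f) = 0 := by
    rw [he, hf]
    linear_combination (p*w2)*hq' - (p*q')*hw2
  refine ⟨D^q, (hDB.zpow_left q).eq, ?_⟩
  rcases hDpow with hroot | ⟨heven, hroot⟩
  · have hDw : D^w = C := Subtype.ext (by rw [hDwcoe, hroot])
    constructor
    · left
      rw [← _root_.zpow_mul, mul_comm q w, _root_.zpow_mul, hDw, hCq]
    · rw [hB, ← _root_.zpow_mul D, ← _root_.zpow_mul C, ← hDw, ← _root_.zpow_mul D, ← _root_.zpow_add D, hkey, zpow_zero]
  · set J : Matrix.SpecialLinearGroup (Fin 2) ℂ :=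
      ⟨(-1 : Matrix (Fin 2) (Fin 2) ℂ), by simp [Matrix.det_neg]⟩ with hJdef
    have hJcomm : ∀ X : Matrix.SpecialLinearGroup (Fin 2) ℂ, Commute J X := by
      intro X
      exact Subtype.ext (by simp only [slVal_mul]; simp [hJdef])
    have hJJ : J * J = 1 := Subtype.ext (by simp only [slVal_mul]; simp [hJdef])
    have hJ2 : J^(2:ℤ) = 1 := by
      rw [show (2:ℤ) = ((2:ℕ):ℤ) from rfl, zpow_natCast, sq, hJJ]
    have hJeven : ∀ m : ℤ, Even m → J^m = 1 := by
      rintro m ⟨k, hk⟩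
      rw [hk, show k + k = 2*k by ring, _root_.zpow_mul, hJ2, _root_.one_zpow]
    have hJodd : ∀ m : ℤ, Odd m → J^m = J := by
      rintro m ⟨k, hk⟩
      rw [hk, _root_.zpow_add, hJeven (2*k) ⟨k, by ring⟩, one_mul, zpow_one]
    have hDw : D^w = J * C := by
      refine Subtype.ext ?_
      rw [hDwcoe, hroot]
      simp only [slVal_mul]
      simp [hJdef]
    have hwe : Even w := by
      rw [← hwcast]
      exact_mod_cast heven
    have hfe : Even f := by
      rw [hf]
      exact hwe.mul_right q'
    have hCeq : C = J * D^w := by rw [hDw, ← mul_assoc, hJJ, one_mul]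
    constructor
    · rcases Int.even_or_odd q with hqe | hqo
      · left
        rw [← _root_.zpow_mul, mul_comm q w, _root_.zpow_mul, hDw, (hJcomm C).mul_zpow, hJeven q hqe,
          one_mul, hCq]
      · right
        rw [← _root_.zpow_mul, mul_comm q w, _root_.zpow_mul, hDw, (hJcomm C).mul_zpow, hJodd q hqo, hCq]
        simp only [slVal_mul]
        simp [hJdef]
    · rw [hB, ← _root_.zpow_mul D, ← _root_.zpow_mul C, hCeq, (hJcomm _).mul_zpow,
        hJeven _ (hfe.mul_left (-p)), one_mul, ← _root_.zpow_mul D, ← _root_.zpow_add D, hkey, zpow_zero]
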